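/- Let n ≥ 3, 0 < q < 1, λ > 0, and x₀ ∈ ℝⁿ. Then the function U_{λ,x₀} is positive and twice continuously differentiable on ℝⁿ, and it satisfies −ΔU_{λ,x₀}(x) = U_{λ,x₀}(x)^{2^*(q)−1} ‖∇U_{λ,x₀}(x)‖^q for every x ∈ ℝⁿ. -/

import Mathlib

open MeasureTheory

noncomputable section

/-- The `i`-th partial derivative of `g : ℝⁿ → ℝ`. -/
def pd (n : ℕ) (i : Fin n) (g : EuclideanSpace ℝ (Fin n) → ℝ)
    (x : EuclideanSpace ℝ (Fin n)) : ℝ :=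
  fderiv ℝ g x (EuclideanSpace.single i (1 : ℝ))

/-- The squared Euclidean norm of the gradient of `g`. -/
def gsq (n : ℕ) (g : EuclideanSpace ℝ (Fin n) → ℝ)
    (x : EuclideanSpace ℝ (Fin n)) : ℝ :=
  ∑ i, (pd n i g x) ^ 2

/-- The Euclidean norm of the gradient of `g`. -/
def gnorm (n : ℕ) (g : EuclideanSpace ℝ (Fin n) → ℝ)
    (x : EuclideanSpace ℝ (Fin n)) : ℝ :=
  Real.sqrt (gsq n g x)

/-- The Laplacian of `g` (trace of the Hessian). -/
def lap (n : ℕ) (g : EuclideanSpace ℝ (Fin n) → ℝ)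
    (x : EuclideanSpace ℝ (Fin n)) : ℝ :=
  ∑ i, pd n i (pd n i g) x

/-- The second critical exponent `2^*(q) = ((2-q)/(n-2))(n + q/(1-q))`. -/
def twoStar (n : ℕ) (q : ℝ) : ℝ :=
  (2 - q) / ((n : ℝ) - 2) * ((n : ℝ) + q / (1 - q))

/-- The explicit family of radial solutions `U_{λ,x₀}`. -/
def Ufun (n : ℕ) (q lam : ℝ) (x₀ x : EuclideanSpace ℝ (Fin n)) : ℝ :=
  ((((n : ℝ) + q / (1 - q)) ^ (1 / (2 - q)) * ((n : ℝ) - 2) ^ ((1 - q) / (2 - q)) * lam)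
      / (1 + (lam * ‖x - x₀‖) ^ ((2 - q) / (1 - q)))) ^ (((n : ℝ) - 2) * (1 - q) / (2 - q))

namespace S7

open RealInnerProductSpace Filter Topology Asymptotics

/-- little-o lemma : `‖h‖^c = o(h)` near 0 for c > 1 -/
theorem isLittleO_norm_rpow {N : ℕ} (c : ℝ) (hc : 1 < c) :
    (fun h : EuclideanSpace ℝ (Fin N) => ‖h‖ ^ c) =o[𝓝 0]
      (fun h : EuclideanSpace ℝ (Fin N) => h) := by
  rw [Asymptotics.isLittleO_iff]
  intro ε hε
  have hcont : ContinuousAt (fun r : ℝ => r ^ (c - 1)) 0 :=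
    Real.continuousAt_rpow_const 0 (c - 1) (Or.inr (by linarith))
  have h0 : (0 : ℝ) ^ (c - 1) = 0 := Real.zero_rpow (by linarith)
  have ht : Tendsto (fun h : EuclideanSpace ℝ (Fin N) => ‖h‖ ^ (c - 1)) (𝓝 0) (𝓝 0) := by
    have := hcont.tendsto.comp
      (tendsto_norm_zero : Tendsto (fun h : EuclideanSpace ℝ (Fin N) => ‖h‖) (𝓝 0) (𝓝 0))
    rwa [h0] at this
  filter_upwards [ht.eventually (eventually_le_nhds hε)] with h hh
  rcases eq_or_ne (‖h‖) 0 with h0' | h0'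
  · simp [Real.norm_eq_abs, h0', Real.zero_rpow (by linarith : c ≠ 0)]
  · have : ‖h‖ ^ c = ‖h‖ ^ (c - 1) * ‖h‖ := by
      rw [← Real.rpow_add_one h0' (c - 1)]; ring_nf
    rw [Real.norm_eq_abs, abs_of_nonneg (Real.rpow_nonneg (norm_nonneg _) _), this]
    exact mul_le_mul_of_nonneg_right hh (norm_nonneg _)

theorem hasFDerivAt_rnorm {N : ℕ} (x₀ : EuclideanSpace ℝ (Fin N)) (c : ℝ)
    {x : EuclideanSpace ℝ (Fin N)} (hx : x ≠ x₀) :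
    HasFDerivAt (fun y => ‖y - x₀‖ ^ c)
      ((c * ‖x - x₀‖ ^ (c - 2)) • innerSL ℝ (x - x₀)) x := by
  have hsub : HasFDerivAt (fun y : EuclideanSpace ℝ (Fin N) => y - x₀)
      (ContinuousLinearMap.id ℝ (EuclideanSpace ℝ (Fin N))) x :=
    (hasFDerivAt_id x).sub_const x₀
  have h2 : HasFDerivAt (fun y : EuclideanSpace ℝ (Fin N) => ‖y - x₀‖ ^ 2)
      (2 • (innerSL ℝ (x - x₀)).comp (ContinuousLinearMap.id ℝ (EuclideanSpace ℝ (Fin N)))) x :=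
    hsub.norm_sq
  have hs : (0:ℝ) < ‖x - x₀‖ := by rwa [norm_pos_iff, sub_ne_zero]
  have hs2 : (‖x - x₀‖ : ℝ) ^ 2 ≠ 0 := by positivity
  have h3 := (Real.hasDerivAt_rpow_const (p := c/2) (Or.inl hs2)).comp_hasFDerivAt x h2
  have hfe : (fun y : EuclideanSpace ℝ (Fin N) => ‖y - x₀‖ ^ c) =
      (fun s : ℝ => s ^ (c/2)) ∘ (fun y : EuclideanSpace ℝ (Fin N) => ‖y - x₀‖ ^ 2) := by
    funext y
    simp only [Function.comp_apply]
    rw [← Real.rpow_natCast ‖y - x₀‖ 2, ← Real.rpow_mul (norm_nonneg _)]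
    norm_num
    congr 1
    ring
  rw [hfe]
  refine h3.congr_fderiv ?_
  have hr : ((‖x - x₀‖ : ℝ) ^ 2) ^ (c/2 - 1) = ‖x - x₀‖ ^ (c - 2) := by
    rw [← Real.rpow_natCast ‖x - x₀‖ 2, ← Real.rpow_mul (norm_nonneg _)]
    congr 1
    ring
  ext w
  simp [hr, ContinuousLinearMap.smul_apply]
  ring

theorem hasFDerivAt_rnorm_zero {N : ℕ} (x₀ : EuclideanSpace ℝ (Fin N)) (c : ℝ) (hc : 1 < c) :
    HasFDerivAt (fun y : EuclideanSpace ℝ (Fin N) => ‖y - x₀‖ ^ c)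
      (0 : EuclideanSpace ℝ (Fin N) →L[ℝ] ℝ) x₀ := by
  rw [hasFDerivAt_iff_isLittleO_nhds_zero]
  have h0 : (fun h : EuclideanSpace ℝ (Fin N) =>
      ‖x₀ + h - x₀‖ ^ c - ‖x₀ - x₀‖ ^ c - (0 : EuclideanSpace ℝ (Fin N) →L[ℝ] ℝ) h) =
      fun h : EuclideanSpace ℝ (Fin N) => ‖h‖ ^ c := by
    funext h
    simp [Real.zero_rpow (by linarith : c ≠ 0)]
  rw [h0]
  exact isLittleO_norm_rpow c hc

/-! ### Definitions -/

def al (q : ℝ) : ℝ := (2 - q) / (1 - q)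

def be (n : ℕ) (q : ℝ) : ℝ := ((n : ℝ) - 2) * (1 - q) / (2 - q)

def Cc (n : ℕ) (q lam : ℝ) : ℝ :=
  ((n : ℝ) + q / (1 - q)) ^ (1 / (2 - q)) * ((n : ℝ) - 2) ^ ((1 - q) / (2 - q)) * lam

def Kc (n : ℕ) (q lam : ℝ) : ℝ := Cc n q lam ^ be n q

def aF (n : ℕ) (q lam : ℝ) (x₀ x : EuclideanSpace ℝ (Fin n)) : ℝ :=
  lam ^ al q * ‖x - x₀‖ ^ al q

def Da (n : ℕ) (q lam : ℝ) (x₀ x : EuclideanSpace ℝ (Fin n)) : ℝ :=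
  lam ^ al q * al q * ‖x - x₀‖ ^ (al q - 2)

def Phi (n : ℕ) (q lam : ℝ) (x₀ x : EuclideanSpace ℝ (Fin n)) : ℝ :=
  Kc n q lam * -(be n q) * (1 + aF n q lam x₀ x) ^ (-(be n q) - 1) * Da n q lam x₀ x

def Psi (n : ℕ) (q lam : ℝ) (x₀ x : EuclideanSpace ℝ (Fin n)) : ℝ :=
  Kc n q lam * -(be n q) * (lam ^ al q * al q) *
    ((-(be n q) - 1) * (1 + aF n q lam x₀ x) ^ (-(be n q) - 2) * (lam ^ al q * al q) *
        (‖x - x₀‖ ^ (al q - 2)) ^ 2 +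
      (al q - 2) * (1 + aF n q lam x₀ x) ^ (-(be n q) - 1) * ‖x - x₀‖ ^ (al q - 4))

section Facts

variable {n : ℕ} {q lam : ℝ}

theorem two_lt_al (hq0 : 0 < q) (hq1 : q < 1) : 2 < al q := by
  rw [al, lt_div_iff₀ (by linarith)]; nlinarith

theorem al_pos (hq0 : 0 < q) (hq1 : q < 1) : 0 < al q := by
  have := two_lt_al hq0 hq1; linarith

theorem nR (hn : 3 ≤ n) : (3:ℝ) ≤ (n:ℝ) := by exact_mod_cast hn

theorem be_pos (hn : 3 ≤ n) (hq0 : 0 < q) (hq1 : q < 1) : 0 < be n q := by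
  have h3 := nR hn
  exact div_pos (mul_pos (by linarith) (by linarith)) (by linarith)

theorem S_pos (hn : 3 ≤ n) (hq0 : 0 < q) (hq1 : q < 1) : 0 < (n : ℝ) + q / (1 - q) := by
  have h3 := nR hn
  have : 0 ≤ q / (1 - q) := div_nonneg hq0.le (by linarith)
  linarith

theorem Cc_pos (hn : 3 ≤ n) (hq0 : 0 < q) (hq1 : q < 1) (hlam : 0 < lam) :
    0 < Cc n q lam :=
  mul_pos (mul_pos (Real.rpow_pos_of_pos (S_pos hn hq0 hq1) _)
    (Real.rpow_pos_of_pos (by have := nR hn; linarith) _)) hlam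

theorem Kc_pos (hn : 3 ≤ n) (hq0 : 0 < q) (hq1 : q < 1) (hlam : 0 < lam) :
    0 < Kc n q lam := Real.rpow_pos_of_pos (Cc_pos hn hq0 hq1 hlam) _

theorem aF_nonneg (hlam : 0 < lam) (x₀ x : EuclideanSpace ℝ (Fin n)) :
    0 ≤ aF n q lam x₀ x :=
  mul_nonneg (Real.rpow_nonneg hlam.le _) (Real.rpow_nonneg (norm_nonneg _) _)

theorem one_aF_pos (hlam : 0 < lam) (x₀ x : EuclideanSpace ℝ (Fin n)) :
    0 < 1 + aF n q lam x₀ x := by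
  have := aF_nonneg (q := q) hlam x₀ x; linarith

theorem ufun_eq (hn : 3 ≤ n) (hq0 : 0 < q) (hq1 : q < 1) (hlam : 0 < lam)
    (x₀ x : EuclideanSpace ℝ (Fin n)) :
    Ufun n q lam x₀ x = Kc n q lam * (1 + aF n q lam x₀ x) ^ (-(be n q)) := by
  have h3 := nR hn
  have hq2 : (0:ℝ) < 2 - q := by linarith
  have hS := S_pos hn hq0 hq1
  have hnum : 0 ≤ ((n : ℝ) + q / (1 - q)) ^ (1 / (2 - q)) * ((n : ℝ) - 2) ^ ((1 - q) / (2 - q)) * lam :=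
    mul_nonneg (mul_nonneg (Real.rpow_nonneg hS.le _) (Real.rpow_nonneg (by linarith) _)) hlam.le
  have hden : 0 ≤ 1 + lam ^ al q * ‖x - x₀‖ ^ al q := (one_aF_pos hlam x₀ x).le
  rw [Ufun]
  simp only [Kc, Cc, aF, al, be] at hden ⊢
  rw [Real.mul_rpow hlam.le (norm_nonneg _), Real.div_rpow hnum hden,
    Real.rpow_neg hden, div_eq_mul_inv]

theorem ufun_pos (hn : 3 ≤ n) (hq0 : 0 < q) (hq1 : q < 1) (hlam : 0 < lam)
    (x₀ x : EuclideanSpace ℝ (Fin n)) : 0 < Ufun n q lam x₀ x := by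
  rw [ufun_eq hn hq0 hq1 hlam]
  exact mul_pos (Kc_pos hn hq0 hq1 hlam)
    (Real.rpow_pos_of_pos (one_aF_pos hlam x₀ x) _)

theorem hasFDerivAt_aF (hq0 : 0 < q) (hq1 : q < 1)
    (x₀ x : EuclideanSpace ℝ (Fin n)) :
    HasFDerivAt (aF n q lam x₀) (Da n q lam x₀ x • innerSL ℝ (x - x₀)) x := by
  rcases eq_or_ne x x₀ with rfl | hx
  · have h := (hasFDerivAt_rnorm_zero x (al q)
      (by linarith [two_lt_al hq0 hq1])).const_mul (lam ^ al q)
    have he : (fun y : EuclideanSpace ℝ (Fin n) => lam ^ al q * ‖y - x‖ ^ al q) =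
        aF n q lam x := rfl
    rw [he] at h
    simpa using h
  · have h := (hasFDerivAt_rnorm x₀ (al q) hx).const_mul (lam ^ al q)
    have he : (fun y : EuclideanSpace ℝ (Fin n) => lam ^ al q * ‖y - x₀‖ ^ al q) =
        aF n q lam x₀ := rfl
    rw [he] at h
    refine h.congr_fderiv ?_
    rw [smul_smul, Da]
    congr 1
    ring

theorem hasFDerivAt_U (hn : 3 ≤ n) (hq0 : 0 < q) (hq1 : q < 1) (hlam : 0 < lam)
    (x₀ x : EuclideanSpace ℝ (Fin n)) :
    HasFDerivAt (Ufun n q lam x₀) (Phi n q lam x₀ x • innerSL ℝ (x - x₀)) x := by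
  have hfe : Ufun n q lam x₀ =
      fun y => Kc n q lam * (1 + aF n q lam x₀ y) ^ (-(be n q)) :=
    funext fun y => ufun_eq hn hq0 hq1 hlam x₀ y
  rw [hfe]
  have hs : 0 < 1 + aF n q lam x₀ x := one_aF_pos hlam x₀ x
  have h1 : HasDerivAt (fun t : ℝ => 1 + t) 1 (aF n q lam x₀ x) := by
    simpa using (hasDerivAt_id (aF n q lam x₀ x)).const_add 1
  have h2 : HasDerivAt (fun t : ℝ => (1 + t) ^ (-(be n q)))
      (-(be n q) * (1 + aF n q lam x₀ x) ^ (-(be n q) - 1) * 1) (aF n q lam x₀ x) :=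
    (Real.hasDerivAt_rpow_const (Or.inl hs.ne')).comp _ h1
  have h3 := (h2.const_mul (Kc n q lam)).comp_hasFDerivAt x
    (hasFDerivAt_aF hq0 hq1 x₀ x)
  refine h3.congr_fderiv ?_
  rw [smul_smul, Phi]
  congr 1
  ring

theorem Phi_self_zero (hq0 : 0 < q) (hq1 : q < 1) (x : EuclideanSpace ℝ (Fin n)) :
    Phi n q lam x x = 0 := by
  have h2 := two_lt_al hq0 hq1
  simp [Phi, Da, sub_self, Real.zero_rpow (by linarith : al q - 2 ≠ 0)]

theorem abs_Phi_le (hn : 3 ≤ n) (hq0 : 0 < q) (hq1 : q < 1) (hlam : 0 < lam)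
    (x₀ x : EuclideanSpace ℝ (Fin n)) :
    |Phi n q lam x₀ x| ≤
      Kc n q lam * be n q * (lam ^ al q * al q) * ‖x - x₀‖ ^ (al q - 2) := by
  have hK := Kc_pos hn hq0 hq1 hlam
  have hb := be_pos hn hq0 hq1
  have hX0 : 0 < (1 + aF n q lam x₀ x) ^ (-(be n q) - 1) :=
    Real.rpow_pos_of_pos (one_aF_pos hlam x₀ x) _
  have hX1 : (1 + aF n q lam x₀ x) ^ (-(be n q) - 1) ≤ 1 :=
    Real.rpow_le_one_of_one_le_of_nonpos
      (by have := aF_nonneg (q := q) hlam x₀ x; linarith) (by linarith)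
  have hL : (0:ℝ) < lam ^ al q := Real.rpow_pos_of_pos hlam _
  have hal := al_pos hq0 hq1
  have hY : (0:ℝ) ≤ ‖x - x₀‖ ^ (al q - 2) := Real.rpow_nonneg (norm_nonneg _) _
  have hD : (0:ℝ) ≤ lam ^ al q * al q * ‖x - x₀‖ ^ (al q - 2) :=
    mul_nonneg (mul_nonneg hL.le hal.le) hY
  have heq : Phi n q lam x₀ x = -(Kc n q lam * be n q *
      (1 + aF n q lam x₀ x) ^ (-(be n q) - 1) *
      (lam ^ al q * al q * ‖x - x₀‖ ^ (al q - 2))) := by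
    rw [Phi, Da]; ring
  rw [heq, abs_neg, abs_of_nonneg (by
    exact mul_nonneg (mul_nonneg (mul_nonneg hK.le hb.le) hX0.le) hD)]
  nlinarith [mul_le_of_le_one_left hD hX1, mul_pos hK hb]

theorem hasFDerivAt_gv (hn : 3 ≤ n) (hq0 : 0 < q) (hq1 : q < 1) (hlam : 0 < lam)
    (x₀ v x : EuclideanSpace ℝ (Fin n)) :
    HasFDerivAt (fun y => Phi n q lam x₀ y * ⟪y - x₀, v⟫)
      ((Psi n q lam x₀ x * ⟪x - x₀, v⟫) • innerSL ℝ (x - x₀)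
        + Phi n q lam x₀ x • innerSL ℝ v) x := by
  have h2al := two_lt_al hq0 hq1
  rcases eq_or_ne x x₀ with rfl | hx
  · have hder0 : (Psi n q lam x x * ⟪x - x, v⟫) • innerSL ℝ (x - x)
        + Phi n q lam x x • innerSL ℝ v = 0 := by
      rw [Phi_self_zero hq0 hq1]
      simp
    rw [hder0, hasFDerivAt_iff_isLittleO_nhds_zero]
    have heq : (fun h : EuclideanSpace ℝ (Fin n) =>
        Phi n q lam x (x + h) * ⟪x + h - x, v⟫ - Phi n q lam x x * ⟪x - x, v⟫
          - (0 : EuclideanSpace ℝ (Fin n) →L[ℝ] ℝ) h) =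
        fun h : EuclideanSpace ℝ (Fin n) => Phi n q lam x (x + h) * ⟪h, v⟫ := by
      funext h
      rw [Phi_self_zero hq0 hq1]
      simp
    rw [heq]
    refine IsBigO.trans_isLittleO ?_ (isLittleO_norm_rpow (al q - 1) (by linarith))
    rw [Asymptotics.isBigO_iff]
    refine ⟨Kc n q lam * be n q * (lam ^ al q * al q) * ‖v‖, ?_⟩
    filter_upwards with h
    have hb1 : |Phi n q lam x (x + h)| ≤
        Kc n q lam * be n q * (lam ^ al q * al q) * ‖h‖ ^ (al q - 2) := by
      have := abs_Phi_le hn hq0 hq1 hlam x (x + h)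
      rwa [add_sub_cancel_left] at this
    have hb2 : |⟪h, v⟫| ≤ ‖h‖ * ‖v‖ := abs_real_inner_le_norm h v
    have hKb : (0:ℝ) ≤ Kc n q lam * be n q * (lam ^ al q * al q) :=
      mul_nonneg (mul_nonneg (Kc_pos hn hq0 hq1 hlam).le (be_pos hn hq0 hq1).le)
        (mul_nonneg (Real.rpow_nonneg hlam.le _) (al_pos hq0 hq1).le)
    have hcomb : ‖h‖ ^ (al q - 2) * (‖h‖ * ‖v‖) = ‖h‖ ^ (al q - 1) * ‖v‖ := by
      rcases eq_or_ne (‖h‖) 0 with h0 | h0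
      · rw [h0]
        rw [Real.zero_rpow (by linarith : al q - 2 ≠ 0),
          Real.zero_rpow (by linarith : al q - 1 ≠ 0)]
        ring
      · rw [show al q - 1 = (al q - 2) + 1 from by ring, Real.rpow_add_one h0]
        ring
    rw [Real.norm_eq_abs, abs_mul, Real.norm_eq_abs,
      abs_of_nonneg (Real.rpow_nonneg (norm_nonneg _) _)]
    calc |Phi n q lam x (x + h)| * |⟪h, v⟫|
        ≤ (Kc n q lam * be n q * (lam ^ al q * al q) * ‖h‖ ^ (al q - 2)) * (‖h‖ * ‖v‖) := by
          apply mul_le_mul hb1 hb2 (abs_nonneg _)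
          exact mul_nonneg hKb (Real.rpow_nonneg (norm_nonneg _) _)
      _ = Kc n q lam * be n q * (lam ^ al q * al q) * ‖v‖ * ‖h‖ ^ (al q - 1) := by
          rw [mul_assoc, hcomb]; ring
  · -- x ≠ x₀
    have hs : 0 < 1 + aF n q lam x₀ x := one_aF_pos hlam x₀ x
    have h1addt : HasDerivAt (fun t : ℝ => 1 + t) 1 (aF n q lam x₀ x) := by
      simpa using (hasDerivAt_id (aF n q lam x₀ x)).const_add 1
    have hchain : HasDerivAt (fun t : ℝ => (1 + t) ^ (-(be n q) - 1))
        ((-(be n q) - 1) * (1 + aF n q lam x₀ x) ^ (-(be n q) - 1 - 1) * 1)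
        (aF n q lam x₀ x) :=
      (Real.hasDerivAt_rpow_const (Or.inl hs.ne')).comp _ h1addt
    rw [show -(be n q) - 1 - 1 = -(be n q) - 2 from by ring] at hchain
    have hA := hchain.comp_hasFDerivAt x (hasFDerivAt_aF hq0 hq1 x₀ x)
    have hB := hasFDerivAt_rnorm x₀ (al q - 2) hx
    rw [show al q - 2 - 2 = al q - 4 from by ring] at hB
    have hAB := (hA.mul hB).const_mul (Kc n q lam * -(be n q) * (lam ^ al q * al q))
    have hPhiEq : (fun y => (Kc n q lam * -(be n q) * (lam ^ al q * al q)) *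
        ((1 + aF n q lam x₀ y) ^ (-(be n q) - 1) * ‖y - x₀‖ ^ (al q - 2))) =
        Phi n q lam x₀ := by
      funext y; rw [Phi, Da]; ring
    simp only [Function.comp_apply, Pi.mul_apply] at hAB
    rw [hPhiEq] at hAB
    have hw : HasFDerivAt (fun y : EuclideanSpace ℝ (Fin n) => ⟪y - x₀, v⟫)
        (innerSL ℝ v) x := by
      have h1 := ((innerSL ℝ v).hasFDerivAt (x := x - x₀)).comp x
        ((hasFDerivAt_id x).sub_const x₀)
      simp only [id_eq] at h1
      have he : (⇑(innerSL ℝ v) ∘ fun y : EuclideanSpace ℝ (Fin n) => y - x₀) =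
          fun y : EuclideanSpace ℝ (Fin n) => ⟪y - x₀, v⟫ := by
        funext y
        simp only [Function.comp_apply, innerSL_apply_apply]
        exact real_inner_comm _ _
      rw [he] at h1
      simpa using h1
    have hfinal := hAB.mul hw
    refine hfinal.congr_fderiv ?_
    ext w
    simp only [ContinuousLinearMap.add_apply, ContinuousLinearMap.smul_apply,
      ContinuousLinearMap.coe_comp', Function.comp_apply, ContinuousLinearMap.coe_id',
      id_eq, innerSL_apply_apply, smul_eq_mul, Psi, Phi, Da]
    ring

theorem continuous_rnorm {c : ℝ} (hc : 0 ≤ c) (x₀ : EuclideanSpace ℝ (Fin n)) :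
    Continuous (fun x : EuclideanSpace ℝ (Fin n) => ‖x - x₀‖ ^ c) :=
  (continuous_id.sub continuous_const).norm.rpow_const (fun _ => Or.inr hc)

theorem continuous_aF (hq0 : 0 < q) (hq1 : q < 1) (x₀ : EuclideanSpace ℝ (Fin n)) :
    Continuous (aF n q lam x₀) := by
  have hal := al_pos hq0 hq1
  exact continuous_const.mul (continuous_rnorm hal.le x₀)

theorem continuous_oneaF (hq0 : 0 < q) (hq1 : q < 1) (hlam : 0 < lam)
    (x₀ : EuclideanSpace ℝ (Fin n)) (p : ℝ) :
    Continuous (fun x => (1 + aF n q lam x₀ x) ^ p) :=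
  (continuous_const.add (continuous_aF hq0 hq1 x₀)).rpow_const
    (fun x => Or.inl (one_aF_pos hlam x₀ x).ne')

theorem continuous_Phi (hq0 : 0 < q) (hq1 : q < 1) (hlam : 0 < lam)
    (x₀ : EuclideanSpace ℝ (Fin n)) : Continuous (Phi n q lam x₀) := by
  have h2al := two_lt_al hq0 hq1
  show Continuous fun x => Kc n q lam * -(be n q) *
    (1 + aF n q lam x₀ x) ^ (-(be n q) - 1) * Da n q lam x₀ x
  exact ((continuous_const.mul (continuous_oneaF hq0 hq1 hlam x₀ _)).mul
    (continuous_const.mul (continuous_rnorm (by linarith) x₀)))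

theorem continuousAt_of_rbound {f : EuclideanSpace ℝ (Fin n) → ℝ}
    {x₀ : EuclideanSpace ℝ (Fin n)} {C c : ℝ} (hc : 0 < c)
    (hb : ∀ x, |f x| ≤ C * ‖x - x₀‖ ^ c) (h0 : f x₀ = 0) : ContinuousAt f x₀ := by
  rw [ContinuousAt, h0]
  have hcont : Continuous fun x : EuclideanSpace ℝ (Fin n) => C * ‖x - x₀‖ ^ c :=
    continuous_const.mul (continuous_rnorm hc.le x₀)
  have hg : Filter.Tendsto (fun x : EuclideanSpace ℝ (Fin n) => C * ‖x - x₀‖ ^ c)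
      (𝓝 x₀) (𝓝 0) := by
    have := hcont.tendsto x₀
    simpa [Real.zero_rpow hc.ne'] using this
  exact squeeze_zero_norm (fun x => by simpa [Real.norm_eq_abs] using hb x) hg

theorem continuous_DvApply (hn : 3 ≤ n) (hq0 : 0 < q) (hq1 : q < 1) (hlam : 0 < lam)
    (x₀ v w : EuclideanSpace ℝ (Fin n)) :
    Continuous (fun x => Psi n q lam x₀ x * ⟪x - x₀, v⟫ * ⟪x - x₀, w⟫
      + Phi n q lam x₀ x * ⟪v, w⟫) := by
  have h2al := two_lt_al hq0 hq1
  have hKb := Kc_pos hn hq0 hq1 hlam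
  have hbe := be_pos hn hq0 hq1
  have hal := al_pos hq0 hq1
  have hL : (0:ℝ) < lam ^ al q := Real.rpow_pos_of_pos hlam _
  set c₂ : ℝ := Kc n q lam * -(be n q) * (lam ^ al q * al q) * (al q - 2) with hc₂
  have hT : Continuous (fun x => c₂ * ((1 + aF n q lam x₀ x) ^ (-(be n q) - 1) *
      (‖x - x₀‖ ^ (al q - 4) * (⟪x - x₀, v⟫ * ⟪x - x₀, w⟫)))) := by
    rw [continuous_iff_continuousAt]
    intro z
    rcases eq_or_ne z x₀ with rfl | hz
    · apply continuousAt_of_rbound (C := |c₂| * (‖v‖ * ‖w‖)) (c := al q - 2) (by linarith)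
      · intro x
        have hX0 : 0 < (1 + aF n q lam z x) ^ (-(be n q) - 1) :=
          Real.rpow_pos_of_pos (one_aF_pos hlam z x) _
        have hX1 : (1 + aF n q lam z x) ^ (-(be n q) - 1) ≤ 1 :=
          Real.rpow_le_one_of_one_le_of_nonpos
            (by have := aF_nonneg (q := q) hlam z x; linarith) (by linarith)
        have hiv : |⟪x - z, v⟫| ≤ ‖x - z‖ * ‖v‖ := abs_real_inner_le_norm _ _
        have hiw : |⟪x - z, w⟫| ≤ ‖x - z‖ * ‖w‖ := abs_real_inner_le_norm _ _
        have hr4 : (0:ℝ) ≤ ‖x - z‖ ^ (al q - 4) := Real.rpow_nonneg (norm_nonneg _) _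
        have hrr : ‖x - z‖ ^ (al q - 4) * (‖x - z‖ * ‖x - z‖) = ‖x - z‖ ^ (al q - 2) := by
          rcases eq_or_ne (‖x - z‖) 0 with h0 | h0
          · rw [h0, Real.zero_rpow (by linarith : al q - 2 ≠ 0)]
            ring
          · rw [show al q - 2 = al q - 4 + 1 + 1 from by ring, Real.rpow_add_one h0,
              Real.rpow_add_one h0]
            ring
        calc |c₂ * ((1 + aF n q lam z x) ^ (-(be n q) - 1) *
              (‖x - z‖ ^ (al q - 4) * (⟪x - z, v⟫ * ⟪x - z, w⟫)))|
            = |c₂| * |(1 + aF n q lam z x) ^ (-(be n q) - 1) *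
              (‖x - z‖ ^ (al q - 4) * (⟪x - z, v⟫ * ⟪x - z, w⟫))| := abs_mul _ _
          _ ≤ |c₂| * ((‖v‖ * ‖w‖) * ‖x - z‖ ^ (al q - 2)) := by
              apply mul_le_mul_of_nonneg_left _ (abs_nonneg _)
              have h1 : |(1 + aF n q lam z x) ^ (-(be n q) - 1) *
                  (‖x - z‖ ^ (al q - 4) * (⟪x - z, v⟫ * ⟪x - z, w⟫))| =
                  (1 + aF n q lam z x) ^ (-(be n q) - 1) *
                  (‖x - z‖ ^ (al q - 4) * (|⟪x - z, v⟫| * |⟪x - z, w⟫|)) := by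
                rw [abs_mul, abs_mul, abs_mul, abs_of_nonneg hX0.le, abs_of_nonneg hr4]
              rw [h1]
              calc (1 + aF n q lam z x) ^ (-(be n q) - 1) *
                    (‖x - z‖ ^ (al q - 4) * (|⟪x - z, v⟫| * |⟪x - z, w⟫|))
                  ≤ 1 * (‖x - z‖ ^ (al q - 4) * ((‖x - z‖ * ‖v‖) * (‖x - z‖ * ‖w‖))) := by
                    apply mul_le_mul hX1 _ (by positivity) zero_le_one
                    exact mul_le_mul_of_nonneg_left
                      (mul_le_mul hiv hiw (abs_nonneg _) (by positivity)) hr4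
                _ = (‖v‖ * ‖w‖) * ‖x - z‖ ^ (al q - 2) := by rw [← hrr]; ring
          _ = |c₂| * (‖v‖ * ‖w‖) * ‖x - z‖ ^ (al q - 2) := by ring
      · simp
    · have hz' : ‖z - x₀‖ ≠ 0 := by
        simp only [ne_eq, norm_eq_zero, sub_eq_zero]; exact hz
      apply ContinuousAt.mul continuousAt_const
      apply ContinuousAt.mul ((continuous_oneaF hq0 hq1 hlam x₀ _).continuousAt)
      apply ContinuousAt.mul
      · exact ((continuousAt_id.sub continuousAt_const).norm).rpow_const (Or.inl hz')
      · exact (((continuous_id.sub continuous_const).inner continuous_const).mul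
          ((continuous_id.sub continuous_const).inner continuous_const)).continuousAt
  have hG : Continuous (fun x => (Kc n q lam * -(be n q) * (lam ^ al q * al q)) *
      ((-(be n q) - 1) * (1 + aF n q lam x₀ x) ^ (-(be n q) - 2) * (lam ^ al q * al q) *
        (‖x - x₀‖ ^ (al q - 2)) ^ 2 * (⟪x - x₀, v⟫ * ⟪x - x₀, w⟫))) := by
    apply continuous_const.mul
    apply Continuous.mul
    · apply Continuous.mul
      · exact (continuous_const.mul (continuous_oneaF hq0 hq1 hlam x₀ _)).mul
          continuous_const
      · exact (continuous_rnorm (by linarith : (0:ℝ) ≤ al q - 2) x₀).pow 2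
    · exact ((continuous_id.sub continuous_const).inner continuous_const).mul
        ((continuous_id.sub continuous_const).inner continuous_const)
  have hP : Continuous (fun x => Phi n q lam x₀ x * ⟪v, w⟫) :=
    (continuous_Phi hq0 hq1 hlam x₀).mul continuous_const
  have heq : (fun x => Psi n q lam x₀ x * ⟪x - x₀, v⟫ * ⟪x - x₀, w⟫
      + Phi n q lam x₀ x * ⟪v, w⟫) =
      fun x => ((Kc n q lam * -(be n q) * (lam ^ al q * al q)) *
      ((-(be n q) - 1) * (1 + aF n q lam x₀ x) ^ (-(be n q) - 2) * (lam ^ al q * al q) *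
        (‖x - x₀‖ ^ (al q - 2)) ^ 2 * (⟪x - x₀, v⟫ * ⟪x - x₀, w⟫)))
      + (c₂ * ((1 + aF n q lam x₀ x) ^ (-(be n q) - 1) *
      (‖x - x₀‖ ^ (al q - 4) * (⟪x - x₀, v⟫ * ⟪x - x₀, w⟫))))
      + (Phi n q lam x₀ x * ⟪v, w⟫) := by
    funext x
    simp only [Psi, hc₂]
    ring
  rw [heq]
  exact (hG.add hT).add hP

theorem contDiff_U (hn : 3 ≤ n) (hq0 : 0 < q) (hq1 : q < 1) (hlam : 0 < lam)
    (x₀ : EuclideanSpace ℝ (Fin n)) : ContDiff ℝ 2 (Ufun n q lam x₀) := by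
  rw [show (2 : WithTop ℕ∞) = 1 + 1 from by norm_num, contDiff_succ_iff_fderiv_apply]
  refine ⟨fun x => (hasFDerivAt_U hn hq0 hq1 hlam x₀ x).differentiableAt, by simp, fun v => ?_⟩
  have he : (fun x => fderiv ℝ (Ufun n q lam x₀) x v) =
      fun x => Phi n q lam x₀ x * ⟪x - x₀, v⟫ := by
    funext x
    rw [(hasFDerivAt_U hn hq0 hq1 hlam x₀ x).fderiv]
    simp only [ContinuousLinearMap.smul_apply, innerSL_apply_apply, smul_eq_mul]
  rw [he, show (1 : WithTop ℕ∞) = 0 + 1 from by norm_num, contDiff_succ_iff_fderiv_apply]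
  refine ⟨fun x => (hasFDerivAt_gv hn hq0 hq1 hlam x₀ v x).differentiableAt, by simp,
    fun w => ?_⟩
  have he2 : (fun x => fderiv ℝ (fun y => Phi n q lam x₀ y * ⟪y - x₀, v⟫) x w) =
      fun x => Psi n q lam x₀ x * ⟪x - x₀, v⟫ * ⟪x - x₀, w⟫ + Phi n q lam x₀ x * ⟪v, w⟫ := by
    funext x
    rw [(hasFDerivAt_gv hn hq0 hq1 hlam x₀ v x).fderiv]
    simp only [ContinuousLinearMap.add_apply, ContinuousLinearMap.smul_apply,
      innerSL_apply_apply, smul_eq_mul]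
  rw [he2]
  exact contDiff_zero.mpr (continuous_DvApply hn hq0 hq1 hlam x₀ v w)

theorem Phi_nonpos (hn : 3 ≤ n) (hq0 : 0 < q) (hq1 : q < 1) (hlam : 0 < lam)
    (x₀ x : EuclideanSpace ℝ (Fin n)) : Phi n q lam x₀ x ≤ 0 := by
  have hK := Kc_pos hn hq0 hq1 hlam
  have hb := be_pos hn hq0 hq1
  have hX0 : 0 < (1 + aF n q lam x₀ x) ^ (-(be n q) - 1) :=
    Real.rpow_pos_of_pos (one_aF_pos hlam x₀ x) _
  have hD : (0:ℝ) ≤ Da n q lam x₀ x :=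
    mul_nonneg (mul_nonneg (Real.rpow_nonneg hlam.le _) (al_pos hq0 hq1).le)
      (Real.rpow_nonneg (norm_nonneg _) _)
  have : Phi n q lam x₀ x = -(Kc n q lam * be n q *
      (1 + aF n q lam x₀ x) ^ (-(be n q) - 1) * Da n q lam x₀ x) := by
    rw [Phi]; ring
  rw [this, neg_nonpos]
  exact mul_nonneg (mul_nonneg (mul_nonneg hK.le hb.le) hX0.le) hD

theorem pd_U_eq (hn : 3 ≤ n) (hq0 : 0 < q) (hq1 : q < 1) (hlam : 0 < lam)
    (x₀ : EuclideanSpace ℝ (Fin n)) (i : Fin n) :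
    pd n i (Ufun n q lam x₀) =
      fun y => Phi n q lam x₀ y * ⟪y - x₀, EuclideanSpace.single i (1:ℝ)⟫ := by
  funext y
  rw [pd, (hasFDerivAt_U hn hq0 hq1 hlam x₀ y).fderiv]
  simp only [ContinuousLinearMap.smul_apply, innerSL_apply_apply, smul_eq_mul]

theorem pd_U_eq' (hn : 3 ≤ n) (hq0 : 0 < q) (hq1 : q < 1) (hlam : 0 < lam)
    (x₀ x : EuclideanSpace ℝ (Fin n)) (i : Fin n) :
    pd n i (Ufun n q lam x₀) x = Phi n q lam x₀ x * (x - x₀) i := by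
  rw [pd_U_eq hn hq0 hq1 hlam x₀ i]
  simp [EuclideanSpace.inner_single_right]

theorem pd2_U (hn : 3 ≤ n) (hq0 : 0 < q) (hq1 : q < 1) (hlam : 0 < lam)
    (x₀ x : EuclideanSpace ℝ (Fin n)) (i : Fin n) :
    pd n i (pd n i (Ufun n q lam x₀)) x =
      Psi n q lam x₀ x * ((x - x₀) i * (x - x₀) i) + Phi n q lam x₀ x := by
  rw [pd, pd_U_eq hn hq0 hq1 hlam x₀ i,
    (hasFDerivAt_gv hn hq0 hq1 hlam x₀ (EuclideanSpace.single i (1:ℝ)) x).fderiv]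
  simp only [ContinuousLinearMap.add_apply, ContinuousLinearMap.smul_apply,
    innerSL_apply_apply, smul_eq_mul]
  rw [EuclideanSpace.inner_single_right, EuclideanSpace.inner_single_left]
  simp [EuclideanSpace.single_apply]
  ring

theorem sum_coord_sq (x₀ x : EuclideanSpace ℝ (Fin n)) :
    ∑ i, (x - x₀) i * (x - x₀) i = ‖x - x₀‖ ^ 2 := by
  have h := real_inner_self_eq_norm_sq (x - x₀)
  rw [← h, PiLp.inner_apply]
  simp [RCLike.inner_apply, sq]

theorem lap_U (hn : 3 ≤ n) (hq0 : 0 < q) (hq1 : q < 1) (hlam : 0 < lam)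
    (x₀ x : EuclideanSpace ℝ (Fin n)) :
    lap n (Ufun n q lam x₀) x =
      Psi n q lam x₀ x * ‖x - x₀‖ ^ 2 + n * Phi n q lam x₀ x := by
  rw [lap]
  rw [Finset.sum_congr rfl (fun i _ => pd2_U hn hq0 hq1 hlam x₀ x i)]
  rw [Finset.sum_add_distrib, ← Finset.mul_sum, sum_coord_sq, Finset.sum_const,
    Finset.card_univ, Fintype.card_fin, nsmul_eq_mul]

theorem gnorm_U (hn : 3 ≤ n) (hq0 : 0 < q) (hq1 : q < 1) (hlam : 0 < lam)
    (x₀ x : EuclideanSpace ℝ (Fin n)) :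
    gnorm n (Ufun n q lam x₀) x = -Phi n q lam x₀ x * ‖x - x₀‖ := by
  rw [gnorm, gsq]
  rw [Finset.sum_congr rfl (fun i _ => by rw [pd_U_eq' hn hq0 hq1 hlam x₀ x i])]
  have : ∑ i, (Phi n q lam x₀ x * (x - x₀) i) ^ 2 =
      (-Phi n q lam x₀ x * ‖x - x₀‖) ^ 2 := by
    have h1 : ∑ i, (Phi n q lam x₀ x * (x - x₀) i) ^ 2 =
        Phi n q lam x₀ x ^ 2 * ∑ i, (x - x₀) i * (x - x₀) i := by
      rw [Finset.mul_sum]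
      exact Finset.sum_congr rfl fun i _ => by ring
    rw [h1, sum_coord_sq]
    ring
  rw [this, Real.sqrt_sq]
  exact mul_nonneg (neg_nonneg.mpr (Phi_nonpos hn hq0 hq1 hlam x₀ x)) (norm_nonneg _)

theorem lhs_closed (hn : 3 ≤ n) (hq0 : 0 < q) (hq1 : q < 1) (hlam : 0 < lam)
    (x₀ x : EuclideanSpace ℝ (Fin n)) (hx : x ≠ x₀) :
    -(Psi n q lam x₀ x * ‖x - x₀‖ ^ 2 + n * Phi n q lam x₀ x) =
      Kc n q lam * ((n:ℝ) - 2) * lam ^ al q * ((n:ℝ) + q / (1 - q)) *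
        (1 + aF n q lam x₀ x) ^ (-(be n q) - 2) * ‖x - x₀‖ ^ (al q - 2) := by
  have hr : (0:ℝ) < ‖x - x₀‖ := by rwa [norm_pos_iff, sub_ne_zero]
  have hA : 0 < 1 + aF n q lam x₀ x := one_aF_pos hlam x₀ x
  have h1q : (1:ℝ) - q ≠ 0 := by linarith
  have h2q : (2:ℝ) - q ≠ 0 := by linarith
  have eX1 : (1 + aF n q lam x₀ x) ^ (-(be n q) - 1) =
      (1 + aF n q lam x₀ x) ^ (-(be n q) - 2) * (1 + aF n q lam x₀ x) := by
    rw [show -(be n q) - 1 = -(be n q) - 2 + 1 from by ring, Real.rpow_add_one hA.ne']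
  have eZ : ‖x - x₀‖ ^ (al q - 4) = ‖x - x₀‖ ^ al q / ‖x - x₀‖ ^ (4:ℕ) := by
    rw [eq_div_iff (pow_ne_zero 4 hr.ne'), ← Real.rpow_natCast ‖x - x₀‖ 4,
      ← Real.rpow_add hr]
    norm_num
  have eY : ‖x - x₀‖ ^ (al q - 2) = ‖x - x₀‖ ^ al q / ‖x - x₀‖ ^ (2:ℕ) := by
    rw [eq_div_iff (pow_ne_zero 2 hr.ne'), ← Real.rpow_natCast ‖x - x₀‖ 2,
      ← Real.rpow_add hr]
    norm_num
  rw [Psi, Phi, Da, eX1, eZ, eY]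
  simp only [aF, al, be]
  field_simp
  ring

theorem rhs_closed (hn : 3 ≤ n) (hq0 : 0 < q) (hq1 : q < 1) (hlam : 0 < lam)
    (x₀ x : EuclideanSpace ℝ (Fin n)) (hx : x ≠ x₀) :
    (Kc n q lam * (1 + aF n q lam x₀ x) ^ (-(be n q))) ^ (twoStar n q - 1) *
      (-Phi n q lam x₀ x * ‖x - x₀‖) ^ q =
    Kc n q lam * ((n:ℝ) - 2) * lam ^ al q * ((n:ℝ) + q / (1 - q)) *
      (1 + aF n q lam x₀ x) ^ (-(be n q) - 2) * ‖x - x₀‖ ^ (al q - 2) := by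
  have hr : (0:ℝ) < ‖x - x₀‖ := by rwa [norm_pos_iff, sub_ne_zero]
  have hA : 0 < 1 + aF n q lam x₀ x := one_aF_pos hlam x₀ x
  have h3 := nR hn
  have h1q : (0:ℝ) < 1 - q := by linarith
  have h2q : (0:ℝ) < 2 - q := by linarith
  have hm : (0:ℝ) < (n:ℝ) - 2 := by linarith
  have hS := S_pos hn hq0 hq1
  have hK := Kc_pos hn hq0 hq1 hlam
  have hCc := Cc_pos hn hq0 hq1 hlam
  have hB := be_pos hn hq0 hq1
  have hal := al_pos hq0 hq1
  have h2al := two_lt_al hq0 hq1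
  have hL : (0:ℝ) < lam ^ al q := Real.rpow_pos_of_pos hlam _
  have hX1 : (0:ℝ) < (1 + aF n q lam x₀ x) ^ (-(be n q) - 1) :=
    Real.rpow_pos_of_pos hA _
  -- step 1 : rewrite -Phi * r
  have eYr : ‖x - x₀‖ ^ (al q - 2) * ‖x - x₀‖ = ‖x - x₀‖ ^ (al q - 1) := by
    rw [show al q - 1 = al q - 2 + 1 from by ring, Real.rpow_add_one hr.ne']
  have hPhiR : -Phi n q lam x₀ x * ‖x - x₀‖ =
      Kc n q lam * be n q * (lam ^ al q * al q) *
        ((1 + aF n q lam x₀ x) ^ (-(be n q) - 1) * ‖x - x₀‖ ^ (al q - 1)) := by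
    rw [← eYr, Phi, Da]; ring
  rw [hPhiR]
  -- step 2 : split all rpow's of products
  rw [Real.mul_rpow hK.le (Real.rpow_nonneg hA.le _)]
  rw [Real.mul_rpow
    (mul_nonneg (mul_nonneg hK.le hB.le) (mul_nonneg hL.le hal.le))
    (mul_nonneg hX1.le (Real.rpow_nonneg hr.le _))]
  rw [Real.mul_rpow hX1.le (Real.rpow_nonneg hr.le _)]
  rw [Real.mul_rpow (mul_nonneg hK.le hB.le) (mul_nonneg hL.le hal.le)]
  rw [Real.mul_rpow hK.le hB.le, Real.mul_rpow hL.le hal.le]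
  rw [← Real.rpow_mul hA.le, ← Real.rpow_mul hA.le, ← Real.rpow_mul hr.le,
    ← Real.rpow_mul hlam.le]
  rw [show (al q - 1) * q = al q - 2 from by rw [al]; field_simp; ring]
  -- merge facts
  have hmne : ((n:ℝ) - 2) ≠ 0 := hm.ne'
  have mA : (1 + aF n q lam x₀ x) ^ (-be n q * (twoStar n q - 1)) *
      (1 + aF n q lam x₀ x) ^ ((-be n q - 1) * q) =
      (1 + aF n q lam x₀ x) ^ (-be n q - 2) := by
    rw [← Real.rpow_add hA]
    congr 1
    rw [be, twoStar]
    field_simp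
    ring
  have mB : be n q ^ q * al q ^ q = ((n:ℝ) - 2) ^ q := by
    rw [← Real.mul_rpow hB.le hal.le]
    congr 1
    rw [be, al]
    field_simp
  have mm : ((n:ℝ) - 2) ^ (1 - q) * ((n:ℝ) - 2) ^ q = (n:ℝ) - 2 := by
    rw [← Real.rpow_add hm, show 1 - q + q = (1:ℝ) from by ring, Real.rpow_one]
  have ml : lam ^ (2 - q) * lam ^ (al q * q) = lam ^ al q := by
    rw [← Real.rpow_add hlam]
    congr 1
    rw [al]
    field_simp
    ring
  have mK : Kc n q lam ^ (twoStar n q - 1) * Kc n q lam ^ q =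
      ((n:ℝ) + q / (1 - q)) * (((n:ℝ) - 2) ^ (1 - q) * lam ^ (2 - q)) * Kc n q lam := by
    rw [← Real.rpow_add hK]
    rw [show twoStar n q - 1 + q = (twoStar n q + q - 2) + 1 from by ring,
      Real.rpow_add_one hK.ne']
    congr 1
    rw [Kc, ← Real.rpow_mul hCc.le]
    rw [show be n q * (twoStar n q + q - 2) = 2 - q from by
      rw [be, twoStar]; field_simp; ring]
    rw [Cc, Real.mul_rpow (mul_nonneg (Real.rpow_nonneg hS.le _)
      (Real.rpow_nonneg hm.le _)) hlam.le,
      Real.mul_rpow (Real.rpow_nonneg hS.le _) (Real.rpow_nonneg hm.le _),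
      ← Real.rpow_mul hS.le, ← Real.rpow_mul hm.le]
    rw [show 1 / (2 - q) * (2 - q) = (1:ℝ) from by field_simp,
      show (1 - q) / (2 - q) * (2 - q) = 1 - q from by field_simp, Real.rpow_one]
    ring
  -- finish
  rw [show Kc n q lam * ((n:ℝ) - 2) * lam ^ al q * ((n:ℝ) + q / (1 - q)) *
      (1 + aF n q lam x₀ x) ^ (-be n q - 2) * ‖x - x₀‖ ^ (al q - 2) =
      Kc n q lam * (((n:ℝ) - 2) ^ (1 - q) * ((n:ℝ) - 2) ^ q) *
      (lam ^ (2 - q) * lam ^ (al q * q)) * ((n:ℝ) + q / (1 - q)) *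
      (1 + aF n q lam x₀ x) ^ (-be n q - 2) * ‖x - x₀‖ ^ (al q - 2) from by
    rw [mm, ml], ← mB, ← mA]
  linear_combination ((1 + aF n q lam x₀ x) ^ (-be n q * (twoStar n q - 1)) *
    (1 + aF n q lam x₀ x) ^ ((-be n q - 1) * q) * (be n q ^ q * al q ^ q) *
    lam ^ (al q * q) * ‖x - x₀‖ ^ (al q - 2)) * mK

theorem main_pde (hn : 3 ≤ n) (hq0 : 0 < q) (hq1 : q < 1) (hlam : 0 < lam)
    (x₀ x : EuclideanSpace ℝ (Fin n)) :
    -lap n (Ufun n q lam x₀) x =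
      Ufun n q lam x₀ x ^ (twoStar n q - 1) * gnorm n (Ufun n q lam x₀) x ^ q := by
  rw [lap_U hn hq0 hq1 hlam, gnorm_U hn hq0 hq1 hlam, ufun_eq hn hq0 hq1 hlam]
  rcases eq_or_ne x x₀ with rfl | hx
  · rw [Phi_self_zero hq0 hq1]
    simp [Real.zero_rpow hq0.ne']
  · exact (lhs_closed hn hq0 hq1 hlam x₀ x hx).trans
      (rhs_closed hn hq0 hq1 hlam x₀ x hx).symm

end Facts

end S7

/-- The function `U_{λ,x₀}` is a positive `C²` solution of the second critical
equation `-ΔU = U^{2^*(q)-1}|∇U|^q` on `ℝⁿ`. -/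
theorem stmt_7 (n : ℕ) (hn : 3 ≤ n) (q : ℝ) (hq0 : 0 < q) (hq1 : q < 1)
    (lam : ℝ) (hlam : 0 < lam) (x₀ : EuclideanSpace ℝ (Fin n)) :
    (∀ x, 0 < Ufun n q lam x₀ x) ∧ ContDiff ℝ 2 (Ufun n q lam x₀) ∧
      ∀ x, -lap n (Ufun n q lam x₀) x
        = Ufun n q lam x₀ x ^ (twoStar n q - 1) * gnorm n (Ufun n q lam x₀) x ^ q :=
  ⟨fun x => S7.ufun_pos hn hq0 hq1 hlam x₀ x, S7.contDiff_U hn hq0 hq1 hlam x₀,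
    fun x => S7.main_pde hn hq0 hq1 hlam x₀ x⟩
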